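/- Let D : ℝⁿ → ℝⁿ be continuously differentiable with a zero y* (D y* = 0). Suppose there exist constants C₁ > 0 and C₂ ≥ 0 such that for all x in a neighborhood of y*, the Jacobian ∇D(x) is invertible with ‖(∇D(x))⁻¹‖ ≤ 1/C₁, and ‖∇D(x) − ∇D(y)‖ ≤ C₂ ‖x − y‖ for all x, y in that neighborhood. Then the Newton iterate y⁺ = y − (∇D(y))⁻¹ D(y) satisfies ‖y⁺ − y*‖ ≤ (C₂ / C₁) ‖y − y*‖² for y sufficiently close to y*. -/

import Mathlib

theorem newton_raphson_quadratic_convergence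
    {n : ℕ} (D : EuclideanSpace ℝ (Fin n) → EuclideanSpace ℝ (Fin n))
    (ystar : EuclideanSpace ℝ (Fin n))
    (hD : ContDiff ℝ 1 D) (hroot : D ystar = 0)
    (U : Set (EuclideanSpace ℝ (Fin n))) (hU : U ∈ nhds ystar)
    (C₁ C₂ : ℝ) (hC₁ : 0 < C₁) (hC₂ : 0 ≤ C₂)
    (J : EuclideanSpace ℝ (Fin n) →
         (EuclideanSpace ℝ (Fin n) →L[ℝ] EuclideanSpace ℝ (Fin n)))
    (hJ₁ : ∀ x ∈ U, (fderiv ℝ D x).comp (J x) = ContinuousLinearMap.id ℝ _)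
    (hJ₂ : ∀ x ∈ U, (J x).comp (fderiv ℝ D x) = ContinuousLinearMap.id ℝ _)
    (hJnorm : ∀ x ∈ U, ‖J x‖ ≤ 1 / C₁)
    (hLip : ∀ x ∈ U, ∀ y ∈ U, ‖fderiv ℝ D x - fderiv ℝ D y‖ ≤ C₂ * ‖x - y‖) :
    ∃ δ > 0, ∀ y : EuclideanSpace ℝ (Fin n), ‖y - ystar‖ < δ →
      ‖(y - J y (D y)) - ystar‖ ≤ (C₂ / C₁) * ‖y - ystar‖ ^ 2 := by
  obtain ⟨δ, hδ, hball⟩ := Metric.mem_nhds_iff.mp hU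
  refine ⟨δ, hδ, fun y hy => ?_⟩
  have hyU : y ∈ U := hball (by simpa [Metric.mem_ball, dist_eq_norm] using hy)
  have hystarU : ystar ∈ U := hball (Metric.mem_ball_self hδ)
  have hdiff : ∀ x, HasFDerivAt D (fderiv ℝ D x) x := fun x =>
    (hD.differentiable one_ne_zero x).hasFDerivAt
  -- segment from ystar to y lies in the ball, hence in U
  have hseg : segment ℝ ystar y ⊆ U := by
    intro x hx
    apply hball
    have := (convex_ball ystar δ).segment_subset (Metric.mem_ball_self hδ)
      (by simpa [Metric.mem_ball, dist_eq_norm] using hy) hx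
    exact this
  -- norm bound on segment: ‖x - y‖ ≤ ‖y - ystar‖
  have hsegnorm : ∀ x ∈ segment ℝ ystar y, ‖x - y‖ ≤ ‖y - ystar‖ := by
    intro x hx
    obtain ⟨a, b, ha, hb, hab, rfl⟩ := hx
    have hb' : b = 1 - a := by linarith
    subst hb'
    have h : a • ystar + (1 - a) • y - y = a • (ystar - y) := by module
    rw [h, norm_smul, Real.norm_eq_abs, abs_of_nonneg ha, norm_sub_rev y ystar]
    nlinarith [norm_nonneg (ystar - y)]
  -- Taylor-type bound via mean value inequality on g x = D x - fderiv D y x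
  have key : ‖D y - D ystar - (fderiv ℝ D y) (y - ystar)‖ ≤ C₂ * ‖y - ystar‖ * ‖y - ystar‖ := by
    have hconv : Convex ℝ (segment ℝ ystar y) := convex_segment _ _
    have hder : ∀ x ∈ segment ℝ ystar y,
        HasFDerivWithinAt (fun z => D z - (fderiv ℝ D y) z)
          (fderiv ℝ D x - fderiv ℝ D y) (segment ℝ ystar y) x := fun x _ =>
      ((hdiff x).sub ((fderiv ℝ D y).hasFDerivAt)).hasFDerivWithinAt
    have hbound : ∀ x ∈ segment ℝ ystar y,
        ‖fderiv ℝ D x - fderiv ℝ D y‖ ≤ C₂ * ‖y - ystar‖ := fun x hx =>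
      (hLip x (hseg hx) y hyU).trans (by
        have := hsegnorm x hx
        nlinarith)
    have := hconv.norm_image_sub_le_of_norm_hasFDerivWithin_le hder hbound
      (left_mem_segment ℝ ystar y) (right_mem_segment ℝ ystar y)
    rw [map_sub]
    refine le_of_eq_of_le ?_ this
    congr 1
    abel
  -- algebraic identity
  have hid : (y - J y (D y)) - ystar = J y ((fderiv ℝ D y) (y - ystar) - (D y - D ystar)) := by
    have h1 : J y ((fderiv ℝ D y) (y - ystar)) = y - ystar := by
      have := hJ₂ y hyU
      calc J y ((fderiv ℝ D y) (y - ystar)) = ((J y).comp (fderiv ℝ D y)) (y - ystar) := rfl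
        _ = y - ystar := by rw [this]; rfl
    rw [map_sub, h1, hroot, sub_zero]
    abel
  rw [hid]
  calc ‖J y ((fderiv ℝ D y) (y - ystar) - (D y - D ystar))‖
      ≤ ‖J y‖ * ‖(fderiv ℝ D y) (y - ystar) - (D y - D ystar)‖ := (J y).le_opNorm _
    _ ≤ (1 / C₁) * (C₂ * ‖y - ystar‖ * ‖y - ystar‖) := by
        apply mul_le_mul (hJnorm y hyU) ?_ (norm_nonneg _)
          (by positivity)
        rw [norm_sub_rev]
        exact key
    _ = (C₂ / C₁) * ‖y - ystar‖ ^ 2 := by ring
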